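/- Let G, H, J : I × ℝ → ℝ be C¹ functions, 2π-periodic in the second variable θ, on I × ℝ with I ⊂ (0,∞) an interval containing t₀, satisfying (∂/∂t − ∂/∂θ)(G + H) = J, (∂/∂t + ∂/∂θ)(G − H) = J, G ≥ 0, |H| ≤ G, and J(t,θ) ≤ G(t,θ)/t everywhere. Then for all t ∈ I with t ≥ t₀: sup_θ G(t, θ) ≤ 2·[sup_θ G(t₀, θ) + sup_θ |H(t₀, θ)|]·(t/t₀). -/

import Mathlib

open Real Set

/-- Partial derivative with respect to the first (time) variable. -/
noncomputable def pd1 (f : ℝ → ℝ → ℝ) (t θ : ℝ) : ℝ := deriv (fun s => f s θ) t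

/-- Partial derivative with respect to the second (space) variable. -/
noncomputable def pd2 (f : ℝ → ℝ → ℝ) (t θ : ℝ) : ℝ := deriv (fun x => f t x) θ

private lemma bddAbove_range_of_per {f : ℝ → ℝ} (hf : Continuous f)
    (hp : Function.Periodic f (2*π)) : BddAbove (Set.range f) := by
  rw [← hp.image_Icc Real.two_pi_pos 0]
  exact (isCompact_Icc.image hf).bddAbove

private lemma pd1_eq (F : ℝ → ℝ → ℝ) (hF : ContDiff ℝ 1 (Function.uncurry F)) (t θ : ℝ) :
    pd1 F t θ = fderiv ℝ (Function.uncurry F) (t, θ) (1, 0) := by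
  have hFd : HasFDerivAt (Function.uncurry F) (fderiv ℝ (Function.uncurry F) (t, θ)) (t, θ) :=
    (hF.differentiable one_ne_zero (t, θ)).hasFDerivAt
  have hpath : HasDerivAt (fun u : ℝ => (u, θ)) ((1 : ℝ), (0 : ℝ)) t :=
    HasDerivAt.prodMk (hasDerivAt_id t) (hasDerivAt_const t θ)
  exact (hFd.comp_hasDerivAt t hpath).deriv

private lemma pd2_eq (F : ℝ → ℝ → ℝ) (hF : ContDiff ℝ 1 (Function.uncurry F)) (t θ : ℝ) :
    pd2 F t θ = fderiv ℝ (Function.uncurry F) (t, θ) (0, 1) := by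
  have hFd : HasFDerivAt (Function.uncurry F) (fderiv ℝ (Function.uncurry F) (t, θ)) (t, θ) :=
    (hF.differentiable one_ne_zero (t, θ)).hasFDerivAt
  have hpath : HasDerivAt (fun x : ℝ => (t, x)) ((0 : ℝ), (1 : ℝ)) θ :=
    HasDerivAt.prodMk (hasDerivAt_const θ t) (hasDerivAt_id θ)
  exact (hFd.comp_hasDerivAt θ hpath).deriv

private lemma hasDerivAt_line (F : ℝ → ℝ → ℝ) (hF : ContDiff ℝ 1 (Function.uncurry F))
    (a c s : ℝ) :
    HasDerivAt (fun u => F u (a + c * u))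
      (pd1 F s (a + c * s) + c * pd2 F s (a + c * s)) s := by
  have hFd : HasFDerivAt (Function.uncurry F)
      (fderiv ℝ (Function.uncurry F) (s, a + c * s)) (s, a + c * s) :=
    (hF.differentiable one_ne_zero _).hasFDerivAt
  have hpath : HasDerivAt (fun u : ℝ => (u, a + c * u)) ((1 : ℝ), c) s := by
    refine HasDerivAt.prodMk (hasDerivAt_id s) ?_
    simpa using ((hasDerivAt_id s).const_mul c).const_add a
  have hcomp := hFd.comp_hasDerivAt s hpath
  have key : (fderiv ℝ (Function.uncurry F) (s, a + c * s)) (1, c)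
      = pd1 F s (a + c * s) + c * pd2 F s (a + c * s) := by
    rw [pd1_eq F hF, pd2_eq F hF,
      show ((1 : ℝ), c) = ((1 : ℝ), (0 : ℝ)) + c • ((0 : ℝ), (1 : ℝ)) by
        simp [Prod.ext_iff],
      map_add, map_smul, smul_eq_mul]
  exact key ▸ hcomp

private lemma cont_pd_line (F : ℝ → ℝ → ℝ) (hF : ContDiff ℝ 1 (Function.uncurry F))
    (a c : ℝ) :
    Continuous fun s => pd1 F s (a + c * s) + c * pd2 F s (a + c * s) := by
  have hfd : Continuous (fderiv ℝ (Function.uncurry F)) := hF.continuous_fderiv one_ne_zero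
  have hline : Continuous fun s : ℝ => ((s, a + c * s) : ℝ × ℝ) := by continuity
  have h1 : Continuous fun s => fderiv ℝ (Function.uncurry F) (s, a + c * s) ((1 : ℝ), (0 : ℝ)) :=
    (hfd.comp hline).clm_apply continuous_const
  have h2 : Continuous fun s => fderiv ℝ (Function.uncurry F) (s, a + c * s) ((0 : ℝ), (1 : ℝ)) :=
    (hfd.comp hline).clm_apply continuous_const
  have e1 : (fun s => pd1 F s (a + c * s))
      = fun s => fderiv ℝ (Function.uncurry F) (s, a + c * s) ((1 : ℝ), (0 : ℝ)) := by
    funext s; exact pd1_eq F hF s _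
  have e2 : (fun s => pd2 F s (a + c * s))
      = fun s => fderiv ℝ (Function.uncurry F) (s, a + c * s) ((0 : ℝ), (1 : ℝ)) := by
    funext s; exact pd2_eq F hF s _
  have : (fun s => pd1 F s (a + c * s) + c * pd2 F s (a + c * s))
      = fun s => (fun s => pd1 F s (a + c * s)) s + c * (fun s => pd2 F s (a + c * s)) s := rfl
  rw [this, e1, e2]
  exact h1.add (continuous_const.mul h2)

private lemma line_integral (F : ℝ → ℝ → ℝ) (hF : ContDiff ℝ 1 (Function.uncurry F))
    (a c t₀ t : ℝ) :
    F t (a + c * t) - F t₀ (a + c * t₀)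
      = ∫ s in t₀..t, (pd1 F s (a + c * s) + c * pd2 F s (a + c * s)) :=
  (intervalIntegral.integral_eq_sub_of_hasDerivAt
    (fun s _ => hasDerivAt_line F hF a c s)
    ((cont_pd_line F hF a c).intervalIntegrable t₀ t)).symm

/-- The future-direction Gronwall bound: the key a priori estimate for global
existence in the areal time coordinate for the T³-Gowdy EMDA system. -/
theorem future_gronwall_energy_bound
    (G H J : ℝ → ℝ → ℝ) (I : Set ℝ) (hI : I ⊆ Ioi 0) (hIconn : I.OrdConnected)
    (t₀ : ℝ) (ht₀ : t₀ ∈ I)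
    (hG : ContDiff ℝ 1 (Function.uncurry G))
    (hH : ContDiff ℝ 1 (Function.uncurry H))
    (hJ : ContDiff ℝ 1 (Function.uncurry J))
    (hGper : ∀ t : ℝ, Function.Periodic (G t) (2*π))
    (hHper : ∀ t : ℝ, Function.Periodic (H t) (2*π))
    (hJper : ∀ t : ℝ, Function.Periodic (J t) (2*π))
    (hminus : ∀ t ∈ I, ∀ θ : ℝ,
      pd1 (fun t θ => G t θ + H t θ) t θ - pd2 (fun t θ => G t θ + H t θ) t θ = J t θ)
    (hplus : ∀ t ∈ I, ∀ θ : ℝ,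
      pd1 (fun t θ => G t θ - H t θ) t θ + pd2 (fun t θ => G t θ - H t θ) t θ = J t θ)
    (hGpos : ∀ t ∈ I, ∀ θ : ℝ, 0 ≤ G t θ)
    (hHG : ∀ t ∈ I, ∀ θ : ℝ, |H t θ| ≤ G t θ)
    (hJG : ∀ t ∈ I, ∀ θ : ℝ, J t θ ≤ G t θ / t) :
    ∀ t ∈ I, t₀ ≤ t →
      (⨆ θ : ℝ, G t θ) ≤
        2 * ((⨆ θ : ℝ, G t₀ θ) + (⨆ θ : ℝ, |H t₀ θ|)) * (t / t₀) := by
  intro t1 ht1 ht01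
  have ht₀pos : 0 < t₀ := hI ht₀
  have ht1pos : 0 < t1 := hI ht1
  have hIcc : Icc t₀ t1 ⊆ I := hIconn.out ht₀ ht1
  have hGc : Continuous (Function.uncurry G) := hG.continuous
  have hHc : Continuous (Function.uncurry H) := hH.continuous
  have hGtc : ∀ t, Continuous (G t) := fun t => hGc.comp (by fun_prop : Continuous fun y : ℝ => (t, y))
  have hHtc : ∀ t, Continuous (H t) := fun t => hHc.comp (by fun_prop : Continuous fun y : ℝ => (t, y))
  have hbG : ∀ t, BddAbove (Set.range (G t)) := fun t =>
    bddAbove_range_of_per (hGtc t) (hGper t)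
  have hbH0 : BddAbove (Set.range fun θ => |H t₀ θ|) :=
    bddAbove_range_of_per (continuous_abs.comp (hHtc t₀))
      (fun x => by simp only [hHper t₀ x])
  set A : ℝ := (⨆ θ : ℝ, G t₀ θ) + (⨆ θ : ℝ, |H t₀ θ|) with hA
  have hA0 : 0 ≤ A := add_nonneg
    (le_trans (hGpos t₀ ht₀ 0) (le_ciSup (hbG t₀) 0))
    (le_trans (abs_nonneg (H t₀ 0)) (le_ciSup hbH0 0))
  set Fs : ℝ → ℝ := fun t => ⨆ θ : ℝ, G t θ with hFs
  -- continuity of the sup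
  have hFcont : Continuous Fs := by
    have h : Fs = fun t => sSup (G t '' Icc 0 (0 + 2*π)) := by
      funext t
      rw [hFs]
      show (⨆ θ : ℝ, G t θ) = _
      rw [iSup, ← (hGper t).image_Icc Real.two_pi_pos 0]
    rw [h]
    exact isCompact_Icc.continuous_sSup hGc
  have hFle : ∀ t θ, G t θ ≤ Fs t := fun t θ => le_ciSup (hbG t) θ
  set g : ℝ → ℝ := fun s => Fs s / s with hg
  have hgc : ContinuousOn g {x : ℝ | x ≠ 0} :=
    ContinuousOn.div hFcont.continuousOn continuousOn_id (fun x hx => hx)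
  set Ψ : ℝ → ℝ := fun t => A + ∫ s in t₀..t, g s with hΨ
  have hgint : ∀ t ∈ Icc t₀ t1, IntervalIntegrable g MeasureTheory.volume t₀ t := by
    intro t ht
    apply ContinuousOn.intervalIntegrable
    intro x hx
    rw [uIcc_of_le ht.1] at hx
    exact (hgc x (ne_of_gt (lt_of_lt_of_le ht₀pos hx.1))).mono
      (fun y hy => ne_of_gt (lt_of_lt_of_le ht₀pos (by rw [uIcc_of_le ht.1] at hy; exact hy.1)))
  -- pointwise bound : Fs t ≤ Ψ t on [t₀, t1]
  have key : ∀ t ∈ Icc t₀ t1, Fs t ≤ Ψ t := by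
    intro t ht
    have htI : t ∈ I := hIcc ht
    have hIcc' : Icc t₀ t ⊆ I := fun s hs => hIcc ⟨hs.1, le_trans hs.2 ht.2⟩
    -- bound on the integrand along a characteristic
    have hJbound : ∀ (a c : ℝ), ∀ s ∈ Icc t₀ t, J s (a + c * s) ≤ g s := by
      intro a c s hs
      have hsI : s ∈ I := hIcc' hs
      have hspos : 0 < s := hI hsI
      calc J s (a + c * s) ≤ G s (a + c * s) / s := hJG s hsI _
        _ ≤ Fs s / s := by gcongr; exact hFle s _
    have hintmono : ∀ (a c : ℝ),
        (∫ s in t₀..t, J s (a + c * s)) ≤ ∫ s in t₀..t, g s := by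
      intro a c
      apply intervalIntegral.integral_mono_on ht.1
      · apply ContinuousOn.intervalIntegrable
        exact ((hJ.continuous.comp (by continuity : Continuous fun s : ℝ =>
          ((s, a + c * s) : ℝ × ℝ)))).continuousOn
      · exact hgint t ht
      · exact hJbound a c
    -- characteristic identity for G + H  (slope -1)
    refine ciSup_le fun θ => ?_
    have hGHc : ContDiff ℝ 1 (Function.uncurry fun t θ => G t θ + H t θ) := hG.add hH
    have hGHc' : ContDiff ℝ 1 (Function.uncurry fun t θ => G t θ - H t θ) := hG.sub hH
    have e1 := line_integral (fun t θ => G t θ + H t θ) hGHc (θ + t) (-1) t₀ t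
    have e2 := line_integral (fun t θ => G t θ - H t θ) hGHc' (θ - t) 1 t₀ t
    have ha1 : θ + t + (-1) * t = θ := by ring
    have ha2 : θ - t + 1 * t = θ := by ring
    rw [ha1] at e1
    rw [ha2] at e2
    -- rewrite integrands using the PDE
    have i1 : (∫ s in t₀..t, (pd1 (fun t θ => G t θ + H t θ) s (θ + t + (-1) * s)
          + (-1) * pd2 (fun t θ => G t θ + H t θ) s (θ + t + (-1) * s)))
        = ∫ s in t₀..t, J s (θ + t + (-1) * s) := by
      apply intervalIntegral.integral_congr
      intro s hs
      rw [uIcc_of_le ht.1] at hs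
      show pd1 (fun t θ => G t θ + H t θ) s (θ + t + (-1) * s)
          + (-1) * pd2 (fun t θ => G t θ + H t θ) s (θ + t + (-1) * s)
          = J s (θ + t + (-1) * s)
      have := hminus s (hIcc' hs) (θ + t + (-1) * s)
      linarith [this]
    have i2 : (∫ s in t₀..t, (pd1 (fun t θ => G t θ - H t θ) s (θ - t + 1 * s)
          + 1 * pd2 (fun t θ => G t θ - H t θ) s (θ - t + 1 * s)))
        = ∫ s in t₀..t, J s (θ - t + 1 * s) := by
      apply intervalIntegral.integral_congr
      intro s hs
      rw [uIcc_of_le ht.1] at hs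
      show pd1 (fun t θ => G t θ - H t θ) s (θ - t + 1 * s)
          + 1 * pd2 (fun t θ => G t θ - H t θ) s (θ - t + 1 * s)
          = J s (θ - t + 1 * s)
      have := hplus s (hIcc' hs) (θ - t + 1 * s)
      linarith [this]
    rw [i1] at e1
    rw [i2] at e2
    -- boundary bounds
    have hb1 : G t₀ (θ + t + (-1) * t₀) + H t₀ (θ + t + (-1) * t₀) ≤ A := by
      refine add_le_add (le_ciSup (hbG t₀) _) ?_
      exact le_trans (le_abs_self _) (le_ciSup hbH0 _)
    have hb2 : G t₀ (θ - t + 1 * t₀) - H t₀ (θ - t + 1 * t₀) ≤ A := by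
      refine add_le_add (le_ciSup (hbG t₀) _) ?_
      exact le_trans (neg_le_abs _) (le_ciSup hbH0 _)
    have m1 := hintmono (θ + t) (-1)
    have m2 := hintmono (θ - t) 1
    have hGt1 : G t θ + H t θ ≤ A + ∫ s in t₀..t, g s := by linarith
    have hGt2 : G t θ - H t θ ≤ A + ∫ s in t₀..t, g s := by linarith
    show G t θ ≤ Ψ t
    rw [hΨ]
    simp only []
    linarith
  -- Gronwall step
  have hΨderiv : ∀ t ∈ Icc t₀ t1, HasDerivAt Ψ (g t) t := by
    intro t ht
    have hpos : 0 < t := lt_of_lt_of_le ht₀pos ht.1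
    have hmem : t ∈ {x : ℝ | x ≠ 0} := ne_of_gt hpos
    have hmeas : StronglyMeasurableAtFilter g (nhds t) :=
      hgc.stronglyMeasurableAtFilter isOpen_compl_singleton t hmem
    have hcont : ContinuousAt g t :=
      hgc.continuousAt (isOpen_compl_singleton.mem_nhds hmem)
    exact (intervalIntegral.integral_hasDerivAt_right (hgint t ht) hmeas hcont).const_add A
  have hne : ∀ t ∈ Icc t₀ t1, t ≠ 0 := fun t ht =>
    ne_of_gt (lt_of_lt_of_le ht₀pos ht.1)
  have hχderiv : ∀ t ∈ Icc t₀ t1,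
      HasDerivAt (fun u => Ψ u / u) ((g t * t - Ψ t * 1) / t ^ 2) t := by
    intro t ht
    exact (hΨderiv t ht).div (hasDerivAt_id t) (hne t ht)
  have hanti : AntitoneOn (fun u => Ψ u / u) (Icc t₀ t1) := by
    apply antitoneOn_of_deriv_nonpos (convex_Icc t₀ t1)
    · intro t ht
      exact ((hχderiv t ht).continuousAt).continuousWithinAt
    · intro t ht
      rw [interior_Icc] at ht
      exact ((hχderiv t (Ioo_subset_Icc_self ht)).differentiableAt).differentiableWithinAt
    · intro t ht
      rw [interior_Icc] at ht
      have ht' : t ∈ Icc t₀ t1 := Ioo_subset_Icc_self ht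
      rw [(hχderiv t ht').deriv]
      have hpos : 0 < t := lt_of_lt_of_le ht₀pos ht'.1
      have hgt : g t * t = Fs t := by
        rw [hg]; field_simp
      apply div_nonpos_of_nonpos_of_nonneg
      · rw [hgt]
        have := key t ht'
        linarith
      · positivity
  have hΨt₀ : Ψ t₀ = A := by
    rw [hΨ]; simp [intervalIntegral.integral_same]
  have hmono : Ψ t1 / t1 ≤ Ψ t₀ / t₀ :=
    hanti (left_mem_Icc.mpr ht01) (right_mem_Icc.mpr ht01) ht01
  -- Ψ t1 / t1 ≤ A / t₀
  rw [hΨt₀] at hmono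
  have hΨt1 : Ψ t1 ≤ A * (t1 / t₀) := by
    rw [div_le_div_iff₀ ht1pos ht₀pos] at hmono
    have h2 : A * (t1 / t₀) * t₀ = A * t1 := by field_simp
    apply le_of_mul_le_mul_right _ ht₀pos
    rw [h2]
    exact hmono
  have hfinal : Fs t1 ≤ A * (t1 / t₀) :=
    le_trans (key t1 (right_mem_Icc.mpr ht01)) hΨt1
  have hdiv : 0 ≤ t1 / t₀ := le_of_lt (div_pos ht1pos ht₀pos)
  show Fs t1 ≤ 2 * A * (t1 / t₀)
  nlinarith
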